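/- For natural numbers p, q with 1 < p ≤ q, the onion graph On(⌊(q-p)/2⌋, 2p-3, ⌈(q-p)/2⌉) is bipartite and unicyclic, with parts of sizes p and q. -/

import Mathlib

/-- The Wiener index of a graph: the sum of distances over all unordered pairs of vertices. -/
noncomputable def wienerIndex {V : Type*} [Fintype V] (G : SimpleGraph V) : ℕ :=
  (∑ u : V, ∑ v : V, G.dist u v) / 2

/-- The transmission of a vertex: the sum of distances from it to all other vertices. -/
noncomputable def transmission {V : Type*} [Fintype V] (G : SimpleGraph V) (x : V) : ℕ :=
  ∑ u : V, G.dist x u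

/-- The onion graph `On(k,l,m)`: a 4-cycle with antipodal vertices `u, v`,
`k` pendant edges attached at `v`, a path on `l` vertices one of whose endpoints
is identified with `u`, and `m` pendant edges attached to the other endpoint of
the path.  Vertices: `Sum.inl 0 = v`, `Sum.inl 1, Sum.inl 2` the two other cycle
vertices, `Sum.inr (Sum.inl i)` the path vertices (with `u` the path vertex `0`
and `u_l` the path vertex `l-1`), `Sum.inr (Sum.inr (Sum.inl _))` the `k`
pendants at `v`, and `Sum.inr (Sum.inr (Sum.inr _))` the `m` pendants at `u_l`. -/
def onionGraph (k l m : ℕ) : SimpleGraph (Fin 3 ⊕ Fin l ⊕ Fin k ⊕ Fin m) :=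
  SimpleGraph.fromRel (fun a b =>
    match a, b with
    | Sum.inl i, Sum.inl j => i = 0 ∧ j ≠ 0
    | Sum.inl i, Sum.inr (Sum.inl p) => i ≠ 0 ∧ (p : ℕ) = 0
    | Sum.inl i, Sum.inr (Sum.inr (Sum.inl _)) => i = 0
    | Sum.inr (Sum.inl p), Sum.inr (Sum.inl q) => (p : ℕ) + 1 = (q : ℕ)
    | Sum.inr (Sum.inl p), Sum.inr (Sum.inr (Sum.inr _)) => (p : ℕ) = l - 1
    | _, _ => False)

/-- `G` is bipartite with parts of sizes `p` and `q`: there is a set of vertices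
of size `p`, with complement of size `q`, such that every edge goes between the
set and its complement. -/
def hasBipartition {V : Type*} [Fintype V] [DecidableEq V]
    (G : SimpleGraph V) (p q : ℕ) : Prop :=
  ∃ s : Finset V, (∀ a b, G.Adj a b → (a ∈ s ↔ b ∉ s)) ∧ s.card = p ∧ sᶜ.card = q

/-- `G` is unicyclic: connected and containing exactly one cycle; equivalently
(for a finite graph), connected with exactly as many edges as vertices. -/
def IsUnicyclic {V : Type*} [Fintype V] (G : SimpleGraph V) : Prop :=
  G.Connected ∧ Nat.card G.edgeSet = Fintype.card V

/-! ### Auxiliary material -/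

/-- The bipartition colouring of the onion graph. -/
def onionSide {k l m : ℕ} (x : Fin 3 ⊕ Fin l ⊕ Fin k ⊕ Fin m) : Bool :=
  match x with
  | Sum.inl i => i = 0
  | Sum.inr (Sum.inl p) => (p : ℕ) % 2 = 0
  | _ => false

lemma onion_side_ne {k l m : ℕ} (hl : l % 2 = 1) (a b : Fin 3 ⊕ Fin l ⊕ Fin k ⊕ Fin m)
    (h : (onionGraph k l m).Adj a b) : onionSide a ≠ onionSide b := by
  rcases a with i | p | j | j <;> rcases b with i' | p' | j' | j' <;>
    simp_all [onionGraph, SimpleGraph.fromRel_adj, onionSide] <;> omega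

lemma range_even_card (l : ℕ) :
    ((Finset.range l).filter (fun i => i % 2 = 0)).card = (l+1)/2 := by
  induction l with
  | zero => simp
  | succ n ih =>
    rw [Finset.range_add_one, Finset.filter_insert]
    by_cases h : n % 2 = 0
    · rw [if_pos h, Finset.card_insert_of_notMem (by simp)]
      omega
    · rw [if_neg h]; omega

lemma onion_side_card (k l m : ℕ) :
    (Finset.univ.filter (fun x : Fin 3 ⊕ Fin l ⊕ Fin k ⊕ Fin m => onionSide x = true)).card
      = 1 + (l+1)/2 := by
  rw [Finset.card_filter, Fintype.sum_sum_type, Fintype.sum_sum_type, Fintype.sum_sum_type]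
  simp only [onionSide, Fin.sum_univ_three]
  have : ∑ p : Fin l, (if decide ((p:ℕ) % 2 = 0) = true then 1 else 0)
      = ∑ i ∈ Finset.range l, (if i % 2 = 0 then 1 else 0) := by
    rw [← Fin.sum_univ_eq_sum_range (fun i => if i % 2 = 0 then 1 else 0) l]
    simp
  rw [← Finset.card_filter (fun i => i % 2 = 0) (Finset.range l), range_even_card] at this
  simp at this ⊢
  omega

lemma onion_reach_path (k l m : ℕ) (hl : 0 < l) (n : ℕ) (h : n < l) :
    (onionGraph k l m).Reachable (Sum.inl 0) (Sum.inr (Sum.inl ⟨n, h⟩)) := by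
  induction n with
  | zero =>
    have h1 : (onionGraph k l m).Adj (Sum.inl 0) (Sum.inl 1) := by
      simp [onionGraph, SimpleGraph.fromRel_adj]
    have h2 : (onionGraph k l m).Adj (Sum.inl 1) (Sum.inr (Sum.inl ⟨0, h⟩)) := by
      simp [onionGraph, SimpleGraph.fromRel_adj]
    exact h1.reachable.trans h2.reachable
  | succ n ih =>
    have h2 : (onionGraph k l m).Adj (Sum.inr (Sum.inl ⟨n, by omega⟩))
        (Sum.inr (Sum.inl ⟨n+1, h⟩)) := by
      rw [onionGraph, SimpleGraph.fromRel_adj]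
      refine ⟨?_, Or.inl rfl⟩
      intro h'
      have h3 := congrArg Fin.val (Sum.inl_injective (Sum.inr_injective h'))
      simp at h3
    exact (ih (by omega)).trans h2.reachable

lemma onion_connected (k l m : ℕ) (hl : 0 < l) : (onionGraph k l m).Connected := by
  rw [SimpleGraph.connected_iff]
  refine ⟨?_, ⟨Sum.inl 0⟩⟩
  have key : ∀ x, (onionGraph k l m).Reachable (Sum.inl 0) x := by
    intro x
    rcases x with i | p | j | j
    · fin_cases i
      · exact SimpleGraph.Reachable.refl _
      · exact SimpleGraph.Adj.reachable (by simp [onionGraph, SimpleGraph.fromRel_adj])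
      · exact SimpleGraph.Adj.reachable (by simp [onionGraph, SimpleGraph.fromRel_adj])
    · exact (onion_reach_path k l m hl p.1 p.2).trans (by rw [Fin.eta])
    · exact SimpleGraph.Adj.reachable (by simp [onionGraph, SimpleGraph.fromRel_adj])
    · refine (onion_reach_path k l m hl (l-1) (by omega)).trans (SimpleGraph.Adj.reachable ?_)
      simp [onionGraph, SimpleGraph.fromRel_adj]
  intro a b
  exact (key a).symm.trans (key b)

/-- A map assigning to each vertex of the onion graph an incident edge;
it is a bijection onto the edge set. -/
def onionEdgeOf {k l m : ℕ} (hl : 0 < l) (x : Fin 3 ⊕ Fin l ⊕ Fin k ⊕ Fin m) :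
    Sym2 (Fin 3 ⊕ Fin l ⊕ Fin k ⊕ Fin m) :=
  match x with
  | Sum.inl i =>
      if i = 1 then s(Sum.inl 1, Sum.inr (Sum.inl ⟨0, hl⟩))
      else s(Sum.inl 0, Sum.inl (if i = 0 then 1 else 2))
  | Sum.inr (Sum.inl p) =>
      if h : (p : ℕ) + 1 < l then s(Sum.inr (Sum.inl p), Sum.inr (Sum.inl ⟨(p:ℕ)+1, h⟩))
      else s(Sum.inl 2, Sum.inr (Sum.inl ⟨0, hl⟩))
  | Sum.inr (Sum.inr (Sum.inl j)) => s(Sum.inl 0, Sum.inr (Sum.inr (Sum.inl j)))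
  | Sum.inr (Sum.inr (Sum.inr j)) =>
      s(Sum.inr (Sum.inl ⟨l-1, by omega⟩), Sum.inr (Sum.inr (Sum.inr j)))

lemma onionEdgeOf_mem {k l m : ℕ} (hl : 0 < l) (x : Fin 3 ⊕ Fin l ⊕ Fin k ⊕ Fin m) :
    onionEdgeOf hl x ∈ (onionGraph k l m).edgeSet := by
  rcases x with i | p | j | j
  · fin_cases i <;> simp [onionEdgeOf, onionGraph, SimpleGraph.fromRel_adj]
  · by_cases h : (p : ℕ) + 1 < l
    · rw [onionEdgeOf, dif_pos h]
      rw [SimpleGraph.mem_edgeSet, onionGraph, SimpleGraph.fromRel_adj]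
      refine ⟨?_, Or.inl rfl⟩
      intro h'
      have h3 := congrArg Fin.val (Sum.inl_injective (Sum.inr_injective h'))
      simp at h3
    · rw [onionEdgeOf, dif_neg h]
      simp [onionGraph, SimpleGraph.fromRel_adj]
  · simp [onionEdgeOf, onionGraph, SimpleGraph.fromRel_adj]
  · simp [onionEdgeOf, onionGraph, SimpleGraph.fromRel_adj]

lemma onionEdgeOf_inj {k l m : ℕ} (hl : 0 < l) :
    Function.Injective (onionEdgeOf (k := k) (m := m) hl) := by
  intro x y hxy
  rcases x with i | p | j | j <;> rcases y with i' | p' | j' | j'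
  all_goals (try (fin_cases i)) <;> (try (fin_cases i'))
  all_goals simp_all [onionEdgeOf, Sym2.eq_iff]
  all_goals (try (split_ifs at hxy with h1 h2)) <;>
    simp_all [Sym2.eq_iff, Fin.ext_iff] <;> omega

lemma onionEdgeOf_surj {k l m : ℕ} (hl : 0 < l) (e : Sym2 (Fin 3 ⊕ Fin l ⊕ Fin k ⊕ Fin m))
    (he : e ∈ (onionGraph k l m).edgeSet) : ∃ x, onionEdgeOf hl x = e := by
  induction e with
  | _ a b =>
    rw [SimpleGraph.mem_edgeSet, onionGraph, SimpleGraph.fromRel_adj] at he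
    obtain ⟨hne, hr⟩ := he
    rcases a with i | p | j | j <;> rcases b with i' | p' | j' | j' <;> simp only at hr
    · rcases hr with ⟨h0, h1⟩ | ⟨h0, h1⟩
      · subst h0
        fin_cases i'
        · exact absurd rfl h1
        · exact ⟨Sum.inl 0, by simp [onionEdgeOf]⟩
        · exact ⟨Sum.inl 2, by simp [onionEdgeOf, Sym2.eq_iff]⟩
      · subst h0
        fin_cases i
        · exact absurd rfl h1
        · exact ⟨Sum.inl 0, by simp [onionEdgeOf, Sym2.eq_iff]⟩
        · exact ⟨Sum.inl 2, by simp [onionEdgeOf, Sym2.eq_iff]⟩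
    · rcases hr with ⟨h0, h1⟩ | h
      · fin_cases i
        · exact absurd rfl h0
        · refine ⟨Sum.inl 1, by simp [onionEdgeOf, Sym2.eq_iff, Fin.ext_iff, h1]⟩
        · refine ⟨Sum.inr (Sum.inl ⟨l-1, by omega⟩), ?_⟩
          rw [onionEdgeOf, dif_neg (by simp; omega)]
          simp [Sym2.eq_iff, Fin.ext_iff]
          omega
      · exact h.elim
    · rcases hr with h | h
      · subst h; exact ⟨Sum.inr (Sum.inr (Sum.inl j')), by simp [onionEdgeOf]⟩
      · exact h.elim
    · rcases hr with h | h <;> exact h.elim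
    · rcases hr with h | ⟨h0, h1⟩
      · exact h.elim
      · fin_cases i'
        · exact absurd rfl h0
        · refine ⟨Sum.inl 1, by simp [onionEdgeOf, Sym2.eq_iff, Fin.ext_iff, h1]⟩
        · refine ⟨Sum.inr (Sum.inl ⟨l-1, by omega⟩), ?_⟩
          rw [onionEdgeOf, dif_neg (by simp; omega)]
          simp [Sym2.eq_iff, Fin.ext_iff]
          omega
    · rcases hr with h | h
      · refine ⟨Sum.inr (Sum.inl p), ?_⟩
        rw [onionEdgeOf, dif_pos (by omega)]
        simp [Sym2.eq_iff, Fin.ext_iff]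
        omega
      · refine ⟨Sum.inr (Sum.inl p'), ?_⟩
        rw [onionEdgeOf, dif_pos (by omega)]
        simp [Sym2.eq_iff, Fin.ext_iff]
        omega
    · rcases hr with h | h <;> exact h.elim
    · rcases hr with h | h
      · refine ⟨Sum.inr (Sum.inr (Sum.inr j')), ?_⟩
        simp [onionEdgeOf, Sym2.eq_iff, Fin.ext_iff]
        omega
      · exact h.elim
    · rcases hr with h | h
      · exact h.elim
      · subst h; exact ⟨Sum.inr (Sum.inr (Sum.inl j)), by simp [onionEdgeOf, Sym2.eq_iff]⟩
    · rcases hr with h | h <;> exact h.elim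
    · rcases hr with h | h <;> exact h.elim
    · rcases hr with h | h <;> exact h.elim
    · rcases hr with h | h <;> exact h.elim
    · rcases hr with h | h
      · exact h.elim
      · refine ⟨Sum.inr (Sum.inr (Sum.inr j)), ?_⟩
        simp [onionEdgeOf, Sym2.eq_iff, Fin.ext_iff]
        omega
    · rcases hr with h | h <;> exact h.elim
    · rcases hr with h | h <;> exact h.elim

lemma onion_card_edges {k l m : ℕ} (hl : 0 < l) :
    Nat.card (onionGraph k l m).edgeSet = Fintype.card (Fin 3 ⊕ Fin l ⊕ Fin k ⊕ Fin m) := by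
  have hb : Function.Bijective
      (fun x : Fin 3 ⊕ Fin l ⊕ Fin k ⊕ Fin m =>
        (⟨onionEdgeOf hl x, onionEdgeOf_mem hl x⟩ : (onionGraph k l m).edgeSet)) := by
    constructor
    · intro x y hxy
      exact onionEdgeOf_inj hl (congrArg Subtype.val hxy)
    · rintro ⟨e, he⟩
      obtain ⟨x, hx⟩ := onionEdgeOf_surj hl e he
      exact ⟨x, Subtype.ext hx⟩
  rw [← Nat.card_eq_of_bijective _ hb, Nat.card_eq_fintype_card]

/-- for `1 < p ≤ q`, the onion graph
`On(⌊(q-p)/2⌋, 2p-3, ⌈(q-p)/2⌉)` is bipartite and unicyclic with parts of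
sizes `p` and `q`. -/
theorem onion_hasBipartition_isUnicyclic (p q : ℕ) (hp : 1 < p) (hpq : p ≤ q) :
    hasBipartition (onionGraph ((q - p) / 2) (2 * p - 3) ((q - p + 1) / 2)) p q ∧
    IsUnicyclic (onionGraph ((q - p) / 2) (2 * p - 3) ((q - p + 1) / 2)) := by
  set k := (q - p) / 2 with hk
  set l := 2 * p - 3 with hldef
  set m := (q - p + 1) / 2 with hm
  have hl : 0 < l := by omega
  have hlo : l % 2 = 1 := by omega
  have hcardV : Fintype.card (Fin 3 ⊕ Fin l ⊕ Fin k ⊕ Fin m) = p + q := by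
    simp only [Fintype.card_sum, Fintype.card_fin]
    omega
  constructor
  · refine ⟨Finset.univ.filter (fun x => onionSide x = true), ?_, ?_, ?_⟩
    · intro a b hab
      have := onion_side_ne hlo a b hab
      simp only [Finset.mem_filter, Finset.mem_univ, true_and]
      rcases Bool.eq_false_or_eq_true (onionSide a) with h | h <;>
        rcases Bool.eq_false_or_eq_true (onionSide b) with h' | h' <;>
        simp_all
    · rw [onion_side_card]
      omega
    · rw [Finset.card_compl, onion_side_card, hcardV]
      omega
  · refine ⟨onion_connected k l m hl, ?_⟩
    rw [onion_card_edges hl, hcardV]
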